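/- Let G be a finite connected, locally connected graph and let C be a cycle in G. Then for every vertex w of C that has a neighbor outside C there exist vertices v and z (depending on w) such that v ∈ N(w) \ V(C), z ∈ V(C), and both wz and vz are edges of G. -/

import Mathlib

open SimpleGraph

def InGClass {V : Type*} (G : SimpleGraph V) (k : ℕ) : Prop :=
  G.Connected ∧ (∀ v : V, (G.neighborSet v).ncard = k) ∧
    ∀ u : V, {v : V | G.dist u v = 2}.ncard ≤ k

def IsTConnectedGraph {V : Type*} (G : SimpleGraph V) (t : ℕ) : Prop :=
  t < Nat.card V ∧ ∀ s : Set V, s.ncard < t → (G.induce sᶜ).Connected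

def GraphLocallyConnected {V : Type*} (G : SimpleGraph V) : Prop :=
  ∀ v : V, (G.induce (G.neighborSet v)).Connected

def GraphClawFree {V : Type*} (G : SimpleGraph V) : Prop :=
  IsEmpty (completeBipartiteGraph (Fin 1) (Fin 3) ↪g G)

lemma aux_walk {V : Type*} (G : SimpleGraph V) (w : V) (L : List V)
    {a b : ↥(G.neighborSet w)} (q : (G.induce (G.neighborSet w)).Walk a b)
    (ha : (a : V) ∉ L) (hb : (b : V) ∈ L) :
    ∃ v z : V, G.Adj w v ∧ v ∉ L ∧ z ∈ L ∧ G.Adj w z ∧ G.Adj v z := by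
  induction q with
  | nil => exact absurd hb ha
  | cons h q ih =>
    rename_i x y c
    by_cases hy : (y : V) ∈ L
    · exact ⟨x, y, x.2, ha, hy, y.2, h⟩
    · exact ih hy hb

theorem stmt_2 {V : Type*} [Fintype V] (G : SimpleGraph V)
    (hconn : G.Connected) (hlc : GraphLocallyConnected G)
    (c : V) (p : G.Walk c c) (hp : p.IsCycle)
    (w : V) (hw : w ∈ p.support) (hout : ∃ u : V, G.Adj w u ∧ u ∉ p.support) :
    ∃ v z : V, G.Adj w v ∧ v ∉ p.support ∧ z ∈ p.support ∧ G.Adj w z ∧ G.Adj v z := by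
  classical
  obtain ⟨u, hadj, hu⟩ := hout
  -- rotate the cycle to start at w
  set q := p.rotate w hw with hq
  have hqc : q.IsCycle := hp.rotate hw
  obtain ⟨x, h, q', hq'⟩ := SimpleGraph.Walk.not_nil_iff.mp hqc.not_nil
  have hrot := SimpleGraph.Walk.support_rotate p w hw
  have hc : c ∈ p.support.tail := by
    cases p with
    | nil => exact absurd rfl hp.ne_nil
    | cons h' p' => simp only [SimpleGraph.Walk.support_cons, List.tail_cons]; exact p'.end_mem_support
  have hwq : w ∈ q.support.tail := by
    rw [hq']; simp only [SimpleGraph.Walk.support_cons, List.tail_cons]; exact q'.end_mem_support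
  have hmem : ∀ y, y ∈ q.support ↔ y ∈ p.support := by
    intro y
    have h1 : q.support = w :: q.support.tail := q.support_eq_cons
    have h2 : p.support = c :: p.support.tail := p.support_eq_cons
    constructor
    · intro hy
      rw [h1] at hy
      rcases List.mem_cons.mp hy with rfl | hy
      · exact hw
      · rw [h2]; exact List.mem_cons_of_mem _ (hrot.mem_iff.mp hy)
    · intro hy
      rw [h2] at hy
      rcases List.mem_cons.mp hy with rfl | hy
      · rw [h1]; exact List.mem_cons_of_mem _ (hrot.mem_iff.mpr hc)
      · rw [h1]; exact List.mem_cons_of_mem _ (hrot.mem_iff.mpr hy)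
  have hz0 : x ∈ p.support := by
    rw [← hmem, hq']; simp
  have hcw := hlc w
  have hu' : u ∈ G.neighborSet w := hadj
  have hx' : x ∈ G.neighborSet w := h
  obtain ⟨r⟩ := hcw ⟨u, hu'⟩ ⟨x, hx'⟩
  exact aux_walk G w p.support r hu hz0
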